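/- Let A be a commutative ring and f a monic polynomial of degree n over A. The splitting algebra A_f of f, defined as A[t_1,...,t_n]/(s_1 - f_1, ..., s_n - f_n) where s_i are the elementary symmetric polynomials and f_i the (signed) coefficients of f, satisfies the universal property: for every A-algebra B and every complete factorization of the image of f in B[t] as (t - v_1)...(t - v_n), there is a unique A-algebra homomorphism A_f → B sending the class τ_i of t_i to v_i for all i. -/

import Mathlib

open MvPolynomial Polynomial

/-- The ideal `(s₁ - f₁, ..., sₙ - fₙ)` defining the splitting algebra, where
`fᵢ = (-1)^i · coeff f (n - i)` are the signed coefficients of `f`. -/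
noncomputable def splittingIdeal (A : Type*) [CommRing A] (f : Polynomial A) (n : ℕ) :
    Ideal (MvPolynomial (Fin n) A) :=
  Ideal.span (Set.range fun i : Fin n =>
    esymm (Fin n) A ((i : ℕ) + 1) -
      MvPolynomial.C ((-1 : A) ^ ((i : ℕ) + 1) * f.coeff (n - ((i : ℕ) + 1))))

/-- The splitting algebra `A_f = A[t₁,...,tₙ]/(s₁ - f₁, ..., sₙ - fₙ)`. -/
noncomputable def SplittingAlgebra (A : Type*) [CommRing A] (f : Polynomial A) (n : ℕ) :=
  MvPolynomial (Fin n) A ⧸ splittingIdeal A f n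

noncomputable instance (A : Type*) [CommRing A] (f : Polynomial A) (n : ℕ) :
    CommRing (SplittingAlgebra A f n) := Ideal.Quotient.commRing _

noncomputable instance (R A : Type*) [CommSemiring R] [CommRing A] [Algebra R A]
    (f : Polynomial A) (n : ℕ) : Algebra R (SplittingAlgebra A f n) :=
  Ideal.Quotient.algebra R

/-- The universal roots `τᵢ` of `f` in the splitting algebra. -/
noncomputable def univRoot (A : Type*) [CommRing A] (f : Polynomial A) (n : ℕ) (i : Fin n) :
    SplittingAlgebra A f n :=
  Ideal.Quotient.mk (splittingIdeal A f n) (MvPolynomial.X i)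

/-- The action of a permutation `σ` on the splitting algebra, sending `τᵢ` to `τ_{σ⁻¹ i}`. -/
noncomputable def permHom (A : Type*) [CommRing A] (f : Polynomial A) (n : ℕ)
    (σ : Equiv.Perm (Fin n)) : SplittingAlgebra A f n →ₐ[A] SplittingAlgebra A f n :=
  Ideal.Quotient.liftₐ (splittingIdeal A f n)
    ((Ideal.Quotient.mkₐ A (splittingIdeal A f n)).comp
      (rename (σ.symm : Fin n → Fin n)))
    (by
      intro a ha
      have h : splittingIdeal A f n ≤ RingHom.ker
          ((Ideal.Quotient.mkₐ A (splittingIdeal A f n)).comp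
            (rename (σ.symm : Fin n → Fin n))) := by
        rw [splittingIdeal, Ideal.span_le]
        rintro _ ⟨i, rfl⟩
        have : (rename (σ.symm : Fin n → Fin n))
            (esymm (Fin n) A ((i : ℕ) + 1) -
              MvPolynomial.C ((-1 : A) ^ ((i : ℕ) + 1) * f.coeff (n - ((i : ℕ) + 1)))) =
            esymm (Fin n) A ((i : ℕ) + 1) -
              MvPolynomial.C ((-1 : A) ^ ((i : ℕ) + 1) * f.coeff (n - ((i : ℕ) + 1))) := by
          rw [map_sub, rename_esymm, rename_C]
        simp only [SetLike.mem_coe, RingHom.mem_ker, AlgHom.coe_comp, Function.comp_apply, this]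
        rw [Ideal.Quotient.mkₐ_eq_mk, Ideal.Quotient.eq_zero_iff_mem]
        exact Ideal.subset_span ⟨i, rfl⟩
      exact h ha)


/-- **Universal property of the splitting algebra.** For every `A`-algebra `B` and every
complete factorization of the image of `f` in `B[t]`, there is a unique `A`-algebra
homomorphism `A_f → B` sending each universal root `τᵢ` to the given root `vᵢ`. -/
theorem splittingAlgebra_universalProperty {A : Type*} [CommRing A]
    (f : Polynomial A) (n : ℕ) (hmonic : f.Monic) (hdeg : f.natDegree = n)
    (B : Type*) [CommRing B] [Algebra A B] (v : Fin n → B)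
    (hsplit : f.map (algebraMap A B) = ∏ i : Fin n, (Polynomial.X - Polynomial.C (v i))) :
    ∃! ψ : SplittingAlgebra A f n →ₐ[A] B, ∀ i : Fin n, ψ (univRoot A f n i) = v i := by
  -- key vanishing lemma
  have key : ∀ i : Fin n, (MvPolynomial.aeval v)
      (esymm (Fin n) A ((i : ℕ) + 1) -
        MvPolynomial.C ((-1 : A) ^ ((i : ℕ) + 1) * f.coeff (n - ((i : ℕ) + 1)))) = 0 := by
    intro i
    have hle : (i : ℕ) + 1 ≤ n := i.2
    have hk : n - ((i : ℕ) + 1) ≤ Multiset.card ((Finset.univ.val.map v)) := by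
      simp [Nat.sub_le]
    have hcoeff := Multiset.prod_X_sub_C_coeff (Finset.univ.val.map v) hk
    have hcard : Multiset.card (Finset.univ.val.map v) = n := by simp
    rw [hcard] at hcoeff
    have hsub : n - (n - ((i : ℕ) + 1)) = (i : ℕ) + 1 := Nat.sub_sub_self hle
    rw [hsub] at hcoeff
    have hcoeff' : (∏ j : Fin n, (Polynomial.X - Polynomial.C (v j))).coeff (n - ((i:ℕ)+1)) =
        (-1) ^ ((i:ℕ)+1) * (Finset.univ.val.map v).esymm ((i:ℕ)+1) := by
      rw [← hcoeff]
      congr 1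
      rw [Multiset.map_map]
      rfl
    have hesymm : (MvPolynomial.aeval v) (esymm (Fin n) A ((i : ℕ) + 1))
        = (Finset.univ.val.map v).esymm ((i:ℕ)+1) := by
      rw [aeval_esymm_eq_multiset_esymm]
    have hfmap : (f.map (algebraMap A B)).coeff (n - ((i:ℕ)+1))
        = algebraMap A B (f.coeff (n - ((i:ℕ)+1))) := by
      simp [Polynomial.coeff_map]
    rw [hsplit] at hfmap
    rw [hcoeff'] at hfmap
    have hval : (Finset.univ.val.map v).esymm ((i:ℕ)+1)
        = (-1 : B) ^ ((i:ℕ)+1) * algebraMap A B (f.coeff (n - ((i:ℕ)+1))) := by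
      rw [← hfmap, ← mul_assoc, ← mul_pow]
      simp
    rw [map_sub, hesymm, hval]
    simp [Algebra.algebraMap_eq_smul_one]
  have hker : splittingIdeal A f n ≤ RingHom.ker (aeval v : MvPolynomial (Fin n) A →ₐ[A] B) := by
    rw [splittingIdeal, Ideal.span_le]
    rintro _ ⟨i, rfl⟩
    exact key i
  refine ⟨Ideal.Quotient.liftₐ (splittingIdeal A f n) (MvPolynomial.aeval v) (fun a ha => hker ha), ?_, ?_⟩
  · intro i
    show (MvPolynomial.aeval v) (MvPolynomial.X i) = v i
    simp
  · intro ψ' hψ'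
    apply Ideal.Quotient.algHom_ext
    apply MvPolynomial.algHom_ext
    intro i
    show ψ' (univRoot A f n i) = (MvPolynomial.aeval v) (MvPolynomial.X i)
    simpa using hψ' i
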